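/- Let m ≥ 1 and k ≥ 1 be integers, and let i_1 < i_2 < … < i_k be integers with 0 ≤ i_1 and i_k ≤ 2m−1. Then at least one of the following holds: (1) there exist 1 ≤ μ < ν ≤ k with i_ν = i_μ + m; (2) there exists 1 ≤ μ < k with i_{μ+1} > i_μ + m, or i_k < i_1 + m; (3) there exist 1 ≤ μ < ν < τ ≤ k with i_ν < i_μ + m, i_τ < i_ν + m, and i_τ > i_μ + m. -/
import Mathlib


def inArc (n : ℕ) (a b z : ZMod n) : Prop :=
  0 < (z - a).val ∧ (z - a).val < (b - a).val

def Cross (n : ℕ) (e f : Sym2 (ZMod n)) : Prop :=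
  ∃ a b c d : ZMod n, e = s(a, b) ∧ f = s(c, d) ∧
    a ≠ b ∧ a ≠ c ∧ a ≠ d ∧ b ≠ c ∧ b ≠ d ∧ c ≠ d ∧
    Xor' (inArc n a b c) (inArc n a b d)

def IsSPM (m : ℕ) (M : Finset (Sym2 (ZMod (2 * m)))) : Prop :=
  M.card = m ∧
  (∀ e ∈ M, ¬ e.IsDiag) ∧
  (∀ v : ZMod (2 * m), ∃! e, e ∈ M ∧ v ∈ e) ∧
  (∀ e ∈ M, ∀ f ∈ M, ¬ Cross (2 * m) e f)

def IsBlockingSet (m : ℕ) (B : Set (Sym2 (ZMod (2 * m)))) : Prop :=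
  (∀ e ∈ B, ¬ e.IsDiag) ∧
  ∀ M : Finset (Sym2 (ZMod (2 * m))), IsSPM m M → ∃ e ∈ M, e ∈ B

def IsBlocker (m : ℕ) (B : Finset (Sym2 (ZMod (2 * m)))) : Prop :=
  IsBlockingSet m (B : Set (Sym2 (ZMod (2 * m)))) ∧ B.card = m

def IsBoundaryEdge (m : ℕ) (e : Sym2 (ZMod (2 * m))) : Prop :=
  ∃ i : ZMod (2 * m), e = s(i, i + 1)

def edgeOrder {n : ℕ} (e : Sym2 (ZMod n)) : ℕ :=
  Sym2.lift ⟨fun i j => min (i - j).val (j - i).val, fun i j => min_comm _ _⟩ e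

def edgeSum {n : ℕ} (e : Sym2 (ZMod n)) : ZMod n :=
  Sym2.lift ⟨fun i j => i + j, fun i j => add_comm i j⟩ e
theorem three_options (m k : ℕ) (hm : 1 ≤ m) (hk : 1 ≤ k) (i : ℕ → ℤ)
    (hmono : ∀ μ ν, 1 ≤ μ → μ < ν → ν ≤ k → i μ < i ν)
    (hlb : 0 ≤ i 1) (hub : i k ≤ 2 * (m : ℤ) - 1) :
    (∃ μ ν, 1 ≤ μ ∧ μ < ν ∧ ν ≤ k ∧ i ν = i μ + m) ∨
    ((∃ μ, 1 ≤ μ ∧ μ < k ∧ i μ + m < i (μ + 1)) ∨ i k < i 1 + m) ∨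
    (∃ μ ν τ, 1 ≤ μ ∧ μ < ν ∧ ν < τ ∧ τ ≤ k ∧
      i ν < i μ + m ∧ i τ < i ν + m ∧ i μ + m < i τ) := by
  classical
  by_contra hcon
  push_neg at hcon
  obtain ⟨hA, ⟨hstep, hspan⟩, hC⟩ := hcon
  have hk2 : 2 ≤ k := by
    rcases Nat.lt_or_ge k 2 with h | h
    · have : k = 1 := by omega
      rw [this] at hspan; omega
    · exact h
  have hex : ∃ n, 2 ≤ n ∧ n ≤ k ∧ i 1 + m ≤ i n := ⟨k, hk2, le_rfl, hspan⟩
  set ν := Nat.find hex with hνdef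
  obtain ⟨hν2, hνk, hνge⟩ := Nat.find_spec hex
  have hmin : ∀ n < ν, ¬ (2 ≤ n ∧ n ≤ k ∧ i 1 + m ≤ i n) := fun n hn => Nat.find_min hex hn
  by_cases heq : i ν = i 1 + m
  · exact hA 1 ν le_rfl (by omega) hνk heq
  have hlt : i 1 + m < i ν := lt_of_le_of_ne hνge (Ne.symm heq)
  have hν3 : 3 ≤ ν := by
    rcases Nat.lt_or_ge ν 3 with h | h
    · have hv2 : ν = 2 := by omega
      have h12 := hstep 1 le_rfl (by omega)
      norm_num at h12
      rw [hv2] at hlt; omega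
    · exact h
  have hprev : i (ν - 1) < i 1 + m := by
    have := hmin (ν - 1) (by omega)
    push_neg at this
    exact this (by omega) (by omega)
  have hv1 : ν - 1 + 1 = ν := by omega
  have hstepν : i ν ≤ i (ν - 1) + m := by
    have := hstep (ν - 1) (by omega) (by omega)
    rwa [hv1] at this
  by_cases heq2 : i ν = i (ν - 1) + m
  · exact hA (ν - 1) ν (by omega) (by omega) hνk heq2
  have hlt2 : i ν < i (ν - 1) + m := lt_of_le_of_ne hstepν heq2
  have := hC 1 (ν - 1) ν le_rfl (by omega) (by omega) hνk hprev hlt2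
  omega
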